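/- Let n ≥ 1, g ≥ 2, and let A₁, …, A_g, B₁, …, B_g ∈ SO(2n+1) be matrices such that for every matrix M among them and all 1 ≤ i, j ≤ n: M_{2i−1,2j−1} = M_{2i,2j} and M_{2i,2j−1} = −M_{2i−1,2j}. Then the product of commutators ∏_{l=1}^{g} [A_l, B_l] is not a generic element of T. (This expresses that the sections s⁺_{ij}(x), for all 1 ≤ i, j ≤ n and all generators x, have no common zeros on the representation variety.) -/

import Mathlib

open Matrix Real

/-- Index `2i` (0-based; row `2i-1` in 1-based numbering) in `Fin (2n+1)`. -/
def ia {n : ℕ} (i : Fin n) : Fin (2*n+1) := ⟨2*i.val, by have := i.isLt; omega⟩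

/-- Index `2i+1` (0-based; row `2i` in 1-based numbering) in `Fin (2n+1)`. -/
def ib {n : ℕ} (i : Fin n) : Fin (2*n+1) := ⟨2*i.val+1, by have := i.isLt; omega⟩

/-- The last index `2n` in `Fin (2n+1)`. -/
def ilast (n : ℕ) : Fin (2*n+1) := ⟨2*n, by omega⟩

/-- Membership in SO(2n+1). -/
def SOodd (n : ℕ) (M : Matrix (Fin (2*n+1)) (Fin (2*n+1)) ℝ) : Prop :=
  M * Mᵀ = 1 ∧ M.det = 1

/-- The block-diagonal torus element `diag(R(θ₁), …, R(θₙ), 1)` of SO(2n+1). -/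
noncomputable def torusMat (n : ℕ) (θ : Fin n → ℝ) :
    Matrix (Fin (2*n+1)) (Fin (2*n+1)) ℝ :=
  Matrix.of fun r c =>
    if hr : r.val < 2*n then
      if c.val < 2*n then
        if r.val / 2 = c.val / 2 then
          if r.val % 2 = 0 then
            if c.val % 2 = 0 then Real.cos (θ ⟨r.val/2, by omega⟩)
            else -Real.sin (θ ⟨r.val/2, by omega⟩)
          else
            if c.val % 2 = 0 then Real.sin (θ ⟨r.val/2, by omega⟩)
            else Real.cos (θ ⟨r.val/2, by omega⟩)
        else 0
      else 0
    else if c.val < 2*n then 0 else 1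

/-- `(θ₁, …, θₙ)` is a generic torus element: its centralizer in SO(2n+1) is exactly
the torus, and the only `λ ∈ {-1,0,1}ⁿ` with `λ·θ ∈ 2πℤ` is `λ = 0`. -/
noncomputable def IsGeneric (n : ℕ) (θ : Fin n → ℝ) : Prop :=
  (∀ M, SOodd n M → M * torusMat n θ = torusMat n θ * M →
      ∃ φ : Fin n → ℝ, M = torusMat n φ) ∧
  (∀ lam : Fin n → ℤ, (∀ i, lam i = -1 ∨ lam i = 0 ∨ lam i = 1) →
      (∃ k : ℤ, ∑ i, (lam i : ℝ) * θ i = 2 * Real.pi * k) → ∀ i, lam i = 0)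

/-- Commutator of matrices: `[P,Q] = P Q P⁻¹ Q⁻¹`. -/
noncomputable def commMat (n : ℕ) (P Q : Matrix (Fin (2*n+1)) (Fin (2*n+1)) ℝ) :
    Matrix (Fin (2*n+1)) (Fin (2*n+1)) ℝ :=
  P * Q * P⁻¹ * Q⁻¹

namespace Stmt3Aux

variable {n : ℕ}

lemma ia_ne_ib (i j : Fin n) : ia i ≠ ib j := by
  intro h; have := congrArg Fin.val h; simp only [ia, ib] at this; omega

lemma ib_ne_ia (i j : Fin n) : ib i ≠ ia j := by
  intro h; have := congrArg Fin.val h; simp only [ia, ib] at this; omega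

lemma ia_eq_ia {i j : Fin n} : ia i = ia j ↔ i = j := by
  constructor
  · intro h; have := congrArg Fin.val h; simp only [ia] at this
    exact Fin.ext (by omega)
  · rintro rfl; rfl

lemma ib_eq_ib {i j : Fin n} : ib i = ib j ↔ i = j := by
  constructor
  · intro h; have := congrArg Fin.val h; simp only [ib] at this
    exact Fin.ext (by omega)
  · rintro rfl; rfl

lemma ia_ne_ilast (i : Fin n) : ia i ≠ ilast n := by
  intro h; have := congrArg Fin.val h; simp only [ia, ilast] at this
  have := i.isLt; omega

lemma ib_ne_ilast (i : Fin n) : ib i ≠ ilast n := by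
  intro h; have := congrArg Fin.val h; simp only [ib, ilast] at this
  have := i.isLt; omega

lemma sum_split (f : Fin (2*n+1) → ℝ) :
    ∑ c, f c = (∑ i : Fin n, (f (ia i) + f (ib i))) + f (ilast n) := by
  classical
  set g : ℕ → ℝ := fun c => if h : c < 2*n+1 then f ⟨c, h⟩ else 0 with hg
  have key : ∀ m : ℕ, ∑ c ∈ Finset.range (2*m+1), g c
      = (∑ i ∈ Finset.range m, (g (2*i) + g (2*i+1))) + g (2*m) := by
    intro m
    induction m with
    | zero => simp
    | succ k ih =>
      have e2 : 2*(k+1)+1 = (2*k+1) + 1 + 1 := by ring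
      have e1 : 2*(k+1) = (2*k+1) + 1 := by ring
      rw [e2, e1, Finset.sum_range_succ, Finset.sum_range_succ (n := 2*k+1), ih,
        Finset.sum_range_succ]
      ring
  have h1 : ∑ c, f c = ∑ c ∈ Finset.range (2*n+1), g c := by
    rw [← Fin.sum_univ_eq_sum_range]
    refine Finset.sum_congr rfl fun c _ => ?_
    rw [hg]; simp only [c.isLt, dif_pos]
  have h2 : ∑ i : Fin n, (f (ia i) + f (ib i))
      = ∑ i ∈ Finset.range n, (g (2*i) + g (2*i+1)) := by
    rw [← Fin.sum_univ_eq_sum_range]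
    refine Finset.sum_congr rfl fun i _ => ?_
    have hi := i.isLt
    rw [hg]; simp only [show 2*i.val < 2*n+1 by omega, show 2*i.val+1 < 2*n+1 by omega, dif_pos]
    rfl
  have h3 : f (ilast n) = g (2*n) := by
    rw [hg]; simp only [show 2*n < 2*n+1 by omega, dif_pos]; rfl
  rw [h1, h2, h3, key n]

lemma mul_entry (M N : Matrix (Fin (2*n+1)) (Fin (2*n+1)) ℝ) (r c : Fin (2*n+1)) :
    (M * N) r c = (∑ k : Fin n, (M r (ia k) * N (ia k) c + M r (ib k) * N (ib k) c))
      + M r (ilast n) * N (ilast n) c := by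
  rw [Matrix.mul_apply, sum_split (f := fun j => M r j * N j c)]

/-- The 2n×2n block is complex-linear. -/
def CLin (M : Matrix (Fin (2*n+1)) (Fin (2*n+1)) ℝ) : Prop :=
  ∀ i j : Fin n, M (ia i) (ia j) = M (ib i) (ib j) ∧ M (ib i) (ia j) = -(M (ia i) (ib j))

/-- Block structure: complex-linear block and vanishing last row/column on block indices. -/
def Blk (M : Matrix (Fin (2*n+1)) (Fin (2*n+1)) ℝ) : Prop :=
  CLin M ∧ ∀ i : Fin n, M (ia i) (ilast n) = 0 ∧ M (ib i) (ilast n) = 0 ∧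
    M (ilast n) (ia i) = 0 ∧ M (ilast n) (ib i) = 0

lemma CLin.transpose {M : Matrix (Fin (2*n+1)) (Fin (2*n+1)) ℝ} (h : CLin M) : CLin Mᵀ := by
  intro i j
  refine ⟨(h j i).1, ?_⟩
  have := (h j i).2
  simp only [Matrix.transpose_apply]
  linarith

lemma Blk.transpose {M : Matrix (Fin (2*n+1)) (Fin (2*n+1)) ℝ} (h : Blk M) : Blk Mᵀ := by
  refine ⟨h.1.transpose, fun i => ?_⟩
  have := h.2 i
  simp only [Matrix.transpose_apply]
  tauto

lemma Blk.one : Blk (1 : Matrix (Fin (2*n+1)) (Fin (2*n+1)) ℝ) := by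
  constructor
  · intro i j
    constructor
    · by_cases h : i = j
      · subst h; rw [Matrix.one_apply_eq, Matrix.one_apply_eq]
      · rw [Matrix.one_apply_ne (fun hc => h (ia_eq_ia.mp hc)),
          Matrix.one_apply_ne (fun hc => h (ib_eq_ib.mp hc))]
    · rw [Matrix.one_apply_ne (ib_ne_ia i j), Matrix.one_apply_ne (ia_ne_ib i j), neg_zero]
  · intro i
    refine ⟨Matrix.one_apply_ne (ia_ne_ilast i), Matrix.one_apply_ne (ib_ne_ilast i),
      Matrix.one_apply_ne (Ne.symm (ia_ne_ilast i)), Matrix.one_apply_ne (Ne.symm (ib_ne_ilast i))⟩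

lemma Blk.mul {M N : Matrix (Fin (2*n+1)) (Fin (2*n+1)) ℝ} (hM : Blk M) (hN : Blk N) :
    Blk (M * N) := by
  obtain ⟨hM1, hM2⟩ := hM
  obtain ⟨hN1, hN2⟩ := hN
  constructor
  · intro i j
    constructor
    · rw [mul_entry, mul_entry, (hM2 i).1, (hM2 i).2.1, zero_mul, zero_mul, add_zero, add_zero]
      refine Finset.sum_congr rfl fun k _ => ?_
      have a1 := (hM1 i k).1
      have a2 := (hM1 i k).2
      have b1 := (hN1 k j).1
      have b2 := (hN1 k j).2
      rw [a1, a2, b1, b2]; ring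
    · rw [mul_entry, mul_entry, (hM2 i).1, (hM2 i).2.1, zero_mul, zero_mul, add_zero, add_zero,
        ← Finset.sum_neg_distrib]
      refine Finset.sum_congr rfl fun k _ => ?_
      have a1 := (hM1 i k).1
      have a2 := (hM1 i k).2
      have b1 := (hN1 k j).1
      have b2 := (hN1 k j).2
      rw [a1, a2, b1, b2]; ring
  · intro i
    refine ⟨?_, ?_, ?_, ?_⟩
    · rw [mul_entry, (hM2 i).1, zero_mul, add_zero]
      refine Finset.sum_eq_zero fun k _ => by rw [(hN2 k).1, (hN2 k).2.1]; ring
    · rw [mul_entry, (hM2 i).2.1, zero_mul, add_zero]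
      refine Finset.sum_eq_zero fun k _ => by rw [(hN2 k).1, (hN2 k).2.1]; ring
    · rw [mul_entry, (hN2 i).2.2.1, mul_zero, add_zero]
      refine Finset.sum_eq_zero fun k _ => by rw [(hM2 k).2.2.1, (hM2 k).2.2.2]; ring
    · rw [mul_entry, (hN2 i).2.2.2, mul_zero, add_zero]
      refine Finset.sum_eq_zero fun k _ => by rw [(hM2 k).2.2.1, (hM2 k).2.2.2]; ring

lemma lastcol {M : Matrix (Fin (2*n+1)) (Fin (2*n+1)) ℝ} (h : M * Mᵀ = 1) (hl : CLin M)
    (i : Fin n) : M (ia i) (ilast n) = 0 ∧ M (ib i) (ilast n) = 0 := by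
  have e1 : (M * Mᵀ) (ia i) (ia i) = 1 := by rw [h, Matrix.one_apply_eq]
  have e2 : (M * Mᵀ) (ib i) (ib i) = 1 := by rw [h, Matrix.one_apply_eq]
  have e3 : (M * Mᵀ) (ib i) (ia i) = 0 := by rw [h, Matrix.one_apply_ne (ib_ne_ia i i)]
  rw [mul_entry] at e1 e2 e3
  simp only [Matrix.transpose_apply] at e1 e2 e3
  set a := M (ia i) (ilast n) with ha
  set b := M (ib i) (ilast n) with hb
  have hs1 : (∑ k : Fin n, (M (ib i) (ia k) * M (ib i) (ia k) + M (ib i) (ib k) * M (ib i) (ib k)))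
      = ∑ k : Fin n, (M (ia i) (ia k) * M (ia i) (ia k) + M (ia i) (ib k) * M (ia i) (ib k)) := by
    refine Finset.sum_congr rfl fun k _ => ?_
    rw [(hl i k).2, ← (hl i k).1]; ring
  have hs3 : (∑ k : Fin n, (M (ib i) (ia k) * M (ia i) (ia k) + M (ib i) (ib k) * M (ia i) (ib k)))
      = 0 := by
    refine Finset.sum_eq_zero fun k _ => ?_
    rw [(hl i k).2, ← (hl i k).1]; ring
  rw [hs1] at e2
  rw [hs3, zero_add] at e3
  have hsq : a * a = b * b := by linarith
  have h4 : (a*a) * (a*a) = 0 := by linear_combination (a*a) * hsq + (a*b) * e3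
  have ha0 : a = 0 := mul_self_eq_zero.mp (mul_self_eq_zero.mp h4)
  have hb0 : b = 0 := mul_self_eq_zero.mp (by rw [← hsq, ha0]; ring)
  exact ⟨ha0, hb0⟩

lemma blk_of {M : Matrix (Fin (2*n+1)) (Fin (2*n+1)) ℝ} (h : M * Mᵀ = 1) (hl : CLin M) :
    Blk M := by
  have h2 : Mᵀ * Mᵀᵀ = 1 := by rw [Matrix.transpose_transpose]; exact mul_eq_one_comm.mp h
  refine ⟨hl, fun i => ?_⟩
  obtain ⟨p, q⟩ := lastcol h hl i
  obtain ⟨r, s⟩ := lastcol h2 hl.transpose i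
  simp only [Matrix.transpose_apply] at r s
  exact ⟨p, q, r, s⟩

/-- Identify the 2n×2n complex-linear block with a complex n×n matrix. -/
def toC (M : Matrix (Fin (2*n+1)) (Fin (2*n+1)) ℝ) : Matrix (Fin n) (Fin n) ℂ :=
  Matrix.of fun i j => (M (ia i) (ia j) : ℂ) + (M (ib i) (ia j) : ℂ) * Complex.I

lemma toC_one : toC (1 : Matrix (Fin (2*n+1)) (Fin (2*n+1)) ℝ) = 1 := by
  ext i j
  simp only [toC, Matrix.of_apply]
  rw [Matrix.one_apply_ne (ib_ne_ia i j)]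
  by_cases h : i = j
  · subst h; rw [Matrix.one_apply_eq, Matrix.one_apply_eq]; push_cast; ring
  · rw [Matrix.one_apply_ne (fun hc => h (ia_eq_ia.mp hc)),
      Matrix.one_apply_ne (fun hc : i = j => h hc)]
    push_cast; ring

lemma toC_mul {M N : Matrix (Fin (2*n+1)) (Fin (2*n+1)) ℝ} (hM : Blk M) :
    toC (M * N) = toC M * toC N := by
  ext i j
  have key1 : (M*N) (ia i) (ia j)
      = ∑ k : Fin n, (M (ia i) (ia k) * N (ia k) (ia j) - M (ib i) (ia k) * N (ib k) (ia j)) := by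
    rw [mul_entry, (hM.2 i).1, zero_mul, add_zero]
    refine Finset.sum_congr rfl fun k _ => ?_
    linear_combination N (ib k) (ia j) * (hM.1 i k).2
  have key2 : (M*N) (ib i) (ia j)
      = ∑ k : Fin n, (M (ia i) (ia k) * N (ib k) (ia j) + M (ib i) (ia k) * N (ia k) (ia j)) := by
    rw [mul_entry, (hM.2 i).2.1, zero_mul, add_zero]
    refine Finset.sum_congr rfl fun k _ => ?_
    linear_combination (-(N (ib k) (ia j))) * (hM.1 i k).1
  rw [Matrix.mul_apply]
  simp only [toC, Matrix.of_apply]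
  rw [key1, key2]
  push_cast
  rw [Finset.sum_mul, ← Finset.sum_add_distrib]
  refine Finset.sum_congr rfl fun k _ => ?_
  linear_combination (-(M (ib i) (ia k) : ℂ) * (N (ib k) (ia j) : ℂ)) * Complex.I_mul_I

lemma prod_good : ∀ L : List (Matrix (Fin (2*n+1)) (Fin (2*n+1)) ℝ),
    (∀ M ∈ L, Blk M ∧ (toC M).det = 1) → Blk L.prod ∧ (toC L.prod).det = 1
  | [], _ => ⟨Blk.one, by rw [List.prod_nil, toC_one, Matrix.det_one]⟩
  | M :: L, h => by
      have hM := h M List.mem_cons_self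
      have ih := prod_good L (fun N hN => h N (List.mem_cons_of_mem _ hN))
      rw [List.prod_cons]
      exact ⟨Blk.mul hM.1 ih.1,
        by rw [toC_mul hM.1, Matrix.det_mul, hM.2, ih.2, one_mul]⟩

lemma comm_good (A B : Matrix (Fin (2*n+1)) (Fin (2*n+1)) ℝ)
    (hA : SOodd n A) (hB : SOodd n B) (hA1 : CLin A) (hB1 : CLin B) :
    Blk (commMat n A B) ∧ (toC (commMat n A B)).det = 1 := by
  have hAi : A⁻¹ = Aᵀ := Matrix.inv_eq_right_inv hA.1
  have hBi : B⁻¹ = Bᵀ := Matrix.inv_eq_right_inv hB.1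
  have bA : Blk A := blk_of hA.1 hA1
  have bB : Blk B := blk_of hB.1 hB1
  have bAt : Blk Aᵀ := bA.transpose
  have bBt : Blk Bᵀ := bB.transpose
  have hc : commMat n A B = A * B * Aᵀ * Bᵀ := by rw [commMat, hAi, hBi]
  constructor
  · rw [hc]; exact ((bA.mul bB).mul bAt).mul bBt
  · rw [hc, toC_mul ((bA.mul bB).mul bAt), toC_mul (bA.mul bB), toC_mul bA,
      Matrix.det_mul, Matrix.det_mul, Matrix.det_mul]
    have h1 : (toC A).det * (toC Aᵀ).det = 1 := by
      rw [← Matrix.det_mul, ← toC_mul bA, hA.1, toC_one, Matrix.det_one]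
    have h2 : (toC B).det * (toC Bᵀ).det = 1 := by
      rw [← Matrix.det_mul, ← toC_mul bB, hB.1, toC_one, Matrix.det_one]
    linear_combination ((toC B).det * (toC Bᵀ).det) * h1 + h2

lemma toC_torus (θ : Fin n → ℝ) :
    toC (torusMat n θ) = Matrix.diagonal (fun i => Complex.exp ((θ i : ℂ) * Complex.I)) := by
  ext i j
  have hi := i.isLt
  have hj := j.isLt
  have haa : torusMat n θ (ia i) (ia j) = if i = j then Real.cos (θ i) else 0 := by
    simp only [torusMat, Matrix.of_apply, ia]
    rw [dif_pos (show 2*i.val < 2*n by omega), if_pos (show 2*j.val < 2*n by omega)]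
    by_cases h : i = j
    · subst h; simp [Nat.mul_mod_right, Nat.mul_div_cancel_left]
    · rw [if_neg (by simp [Nat.mul_div_cancel_left]; exact fun hc => h (Fin.ext hc)), if_neg h]
  have hba : torusMat n θ (ib i) (ia j) = if i = j then Real.sin (θ i) else 0 := by
    simp only [torusMat, Matrix.of_apply, ia, ib]
    rw [dif_pos (show 2*i.val+1 < 2*n by omega), if_pos (show 2*j.val < 2*n by omega)]
    by_cases h : i = j
    · subst h
      rw [if_pos (by omega)]
      simp [Nat.mul_mod_right, Nat.mul_add_mod, show (2*i.val+1)/2 = i.val by omega]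
    · rw [if_neg (by intro hc; exact h (Fin.ext (by omega))), if_neg h]
  simp only [toC, Matrix.of_apply, haa, hba]
  by_cases h : i = j
  · subst h
    rw [Matrix.diagonal_apply_eq, if_pos rfl, if_pos rfl, Complex.exp_mul_I,
      ← Complex.ofReal_cos, ← Complex.ofReal_sin]
  · rw [Matrix.diagonal_apply_ne _ h, if_neg h, if_neg h]
    push_cast; ring

end Stmt3Aux

open Stmt3Aux in
theorem stmt3 (n g : ℕ) (hn : 1 ≤ n) (hg : 2 ≤ g)
    (A B : Fin g → Matrix (Fin (2*n+1)) (Fin (2*n+1)) ℝ)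
    (hSOA : ∀ l, SOodd n (A l)) (hSOB : ∀ l, SOodd n (B l))
    (hA : ∀ l (i j : Fin n),
      A l (ia i) (ia j) = A l (ib i) (ib j) ∧ A l (ib i) (ia j) = -(A l (ia i) (ib j)))
    (hB : ∀ l (i j : Fin n),
      B l (ia i) (ia j) = B l (ib i) (ib j) ∧ B l (ib i) (ia j) = -(B l (ia i) (ib j)))
    (θ : Fin n → ℝ) (hgen : IsGeneric n θ) :
    ((List.finRange g).map (fun l => commMat n (A l) (B l))).prod ≠ torusMat n θ := by
  intro heq
  set L := (List.finRange g).map (fun l => commMat n (A l) (B l)) with hL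
  have hgood : ∀ M ∈ L, Blk M ∧ (toC M).det = 1 := by
    intro M hM
    rw [hL, List.mem_map] at hM
    obtain ⟨l, -, rfl⟩ := hM
    exact comm_good _ _ (hSOA l) (hSOB l) (hA l) (hB l)
  have hdet := (prod_good L hgood).2
  rw [heq, toC_torus, Matrix.det_diagonal, ← Complex.exp_sum] at hdet
  obtain ⟨k, hk⟩ := Complex.exp_eq_one_iff.mp hdet
  rw [← Finset.sum_mul] at hk
  rw [show (k:ℂ) * (2 * (Real.pi:ℂ) * Complex.I) = ((k:ℂ) * (2 * (Real.pi:ℂ))) * Complex.I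
      from by ring] at hk
  have hc := mul_right_cancel₀ Complex.I_ne_zero hk
  have hsum : (∑ i, θ i) = (k:ℝ) * (2 * Real.pi) := by exact_mod_cast hc
  have hz := hgen.2 (fun _ => 1) (fun i => Or.inr (Or.inr rfl))
    ⟨k, by push_cast; rw [show ∑ i, (1:ℝ) * θ i = ∑ i, θ i from by simp, hsum]; ring⟩
    ⟨0, by omega⟩
  simp at hz
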